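/- Let m ≥ 1 and N ≥ 1, and let n : Fin m → ℕ be color multiplicities with ∑_{j} n j = N. Let Δ = gcd_{j} (n j) and let γ(C_N, n) denote the number of cyclic necklaces with multiplicities n. Then N · γ(C_N, n) = ∑_{d ∣ Δ} φ(d) · P(n/d), where P(n/d) is the multinomial coefficient (N/d)! / ∏_j (n j / d)! and φ is Euler's totient function. -/

import Mathlib

/-- A coloring of the regular `N`-gon in `m` colors with multiplicities `n`:
a function `f : ZMod N → Fin m` whose fiber over each color `j` has cardinality `n j`. -/
def IsColoring (N m : ℕ) (n : Fin m → ℕ) (f : ZMod N → Fin m) : Prop :=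
  ∀ j, Nat.card {x : ZMod N // f x = j} = n j

/-- Cyclic equivalence of colorings: one is obtained from the other by a rotation `x ↦ x + c`. -/
def cyclicSetoid (N m : ℕ) (n : Fin m → ℕ) :
    Setoid {f : ZMod N → Fin m // IsColoring N m n f} where
  r f g := ∃ c : ZMod N, ∀ x, (g : ZMod N → Fin m) x = (f : ZMod N → Fin m) (x + c)
  iseqv := by
    refine ⟨fun f => ⟨0, fun x => by rw [add_zero]⟩, ?_, ?_⟩
    · rintro f g ⟨c, h⟩
      exact ⟨-c, fun x => by rw [h, neg_add_cancel_right]⟩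
    · rintro f g k ⟨c, h1⟩ ⟨d, h2⟩
      exact ⟨d + c, fun x => by rw [h2, h1, add_assoc]⟩

/-- The number of cyclic necklaces: orbits of colorings under rotations. -/
noncomputable def gammaC (N m : ℕ) (n : Fin m → ℕ) : ℕ :=
  Nat.card (Quotient (cyclicSetoid N m n))

/-- Dihedral equivalence of colorings: one is obtained from the other by an element of
the subgroup of permutations of `ZMod N` generated by `x ↦ x + 1` and `x ↦ -x`. -/
def dihedralSetoid (N m : ℕ) (n : Fin m → ℕ) :
    Setoid {f : ZMod N → Fin m // IsColoring N m n f} where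
  r f g := ∃ σ ∈ Subgroup.closure
      ({Equiv.addRight (1 : ZMod N), Equiv.neg (ZMod N)} : Set (Equiv.Perm (ZMod N))),
      ∀ x, (g : ZMod N → Fin m) x = (f : ZMod N → Fin m) (σ x)
  iseqv := by
    refine ⟨fun f => ⟨1, one_mem _, fun x => rfl⟩, ?_, ?_⟩
    · rintro f g ⟨σ, hσ, h⟩
      exact ⟨σ⁻¹, inv_mem hσ, fun x => by rw [h, ← Equiv.Perm.mul_apply, mul_inv_cancel, Equiv.Perm.one_apply]⟩
    · rintro f g k ⟨σ, hσ, h1⟩ ⟨τ, hτ, h2⟩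
      exact ⟨σ * τ, mul_mem hσ hτ, fun x => by rw [h2, h1, Equiv.Perm.mul_apply]⟩

/-- The number of dihedral necklaces: orbits of colorings under rotations and reflections. -/
noncomputable def gammaD (N m : ℕ) (n : Fin m → ℕ) : ℕ :=
  Nat.card (Quotient (dihedralSetoid N m n))

open Finset

private def sigmaFstFiber {m : ℕ} (k : Fin m → ℕ) (j : Fin m) :
    {p : Σ j', Fin (k j') // p.1 = j} ≃ Fin (k j) where
  toFun p := p.2 ▸ p.1.2
  invFun i := ⟨⟨j, i⟩, rfl⟩
  left_inv := by rintro ⟨⟨j', i⟩, rfl⟩; rfl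
  right_inv i := rfl

private def restrictEquiv {α : Type*} {m : ℕ} (s f : α → Fin m) :
    {σ : Equiv.Perm α // s ∘ σ = f} ≃ ((j : Fin m) → ({x // f x = j} ≃ {y // s y = j})) where
  toFun σ j := σ.1.subtypeEquiv fun x => by
    have := congrFun σ.2 x
    simp only [Function.comp_apply] at this
    rw [← this]
  invFun t := ⟨(Equiv.sigmaFiberEquiv f).symm.trans
      ((Equiv.sigmaCongrRight t).trans (Equiv.sigmaFiberEquiv s)),
    funext fun x => (t (f x) ⟨x, rfl⟩).2⟩
  left_inv σ := by
    apply Subtype.ext; apply Equiv.ext; intro x; rfl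
  right_inv t := by
    funext j; apply Equiv.ext; rintro ⟨x, hx⟩
    subst hx
    exact Subtype.ext rfl

private lemma card_colorings {α : Type*} [Fintype α] [DecidableEq α] {m : ℕ} (k : Fin m → ℕ)
    (hk : ∑ j, k j = Fintype.card α) :
    Nat.card {f : α → Fin m // ∀ j, Nat.card {x // f x = j} = k j} =
      Nat.multinomial Finset.univ k := by
  classical
  obtain ⟨e⟩ : Nonempty ((Σ j, Fin (k j)) ≃ α) :=
    ⟨Fintype.equivOfCardEq (by simp [hk])⟩
  set s : α → Fin m := fun x => (e.symm x).1 with hs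
  have hfib : ∀ j, Nat.card {x // s x = j} = k j := by
    intro j
    rw [Nat.card_congr ((e.symm.subtypeEquiv fun x => Iff.rfl).trans (sigmaFstFiber k j))]
    simp
  set C := {f : α → Fin m // ∀ j, Nat.card {x // f x = j} = k j} with hC
  letI : Fintype C := Fintype.ofFinite C
  let Φ : Equiv.Perm α → C := fun σ => ⟨s ∘ σ, fun j => by
    show Nat.card {x // s (σ x) = j} = k j
    rw [Nat.card_congr (σ.subtypeEquiv fun x => Iff.rfl : {x // s (σ x) = j} ≃ {y // s y = j})]
    exact hfib j⟩
  have h1 : Nat.card (Equiv.Perm α) = ∑ f : C, Nat.card {σ : Equiv.Perm α // Φ σ = f} := by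
    letI : ∀ f : C, Fintype {σ : Equiv.Perm α // Φ σ = f} := fun f => Fintype.ofFinite _
    rw [Nat.card_congr (Equiv.sigmaFiberEquiv Φ).symm, Nat.card_eq_fintype_card,
      Fintype.card_sigma]
    exact Finset.sum_congr rfl fun f _ => (Nat.card_eq_fintype_card).symm
  have h2 : ∀ f : C, Nat.card {σ : Equiv.Perm α // Φ σ = f} = ∏ j, Nat.factorial (k j) := by
    intro f
    have e1 : {σ : Equiv.Perm α // Φ σ = f} ≃ {σ : Equiv.Perm α // s ∘ σ = f.1} :=
      Equiv.subtypeEquivRight fun σ => Subtype.ext_iff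
    rw [Nat.card_congr (e1.trans (restrictEquiv s f.1)), Nat.card_pi]
    refine Finset.prod_congr rfl fun j _ => ?_
    have hcard : Nat.card {x // f.1 x = j} = Nat.card {y // s y = j} := by
      rw [hfib j, f.2 j]
    obtain ⟨ej⟩ : Nonempty ({x // f.1 x = j} ≃ {y // s y = j}) :=
      ⟨Fintype.equivOfCardEq (by
        rw [← Nat.card_eq_fintype_card, ← Nat.card_eq_fintype_card]; exact hcard)⟩
    rw [Nat.card_eq_fintype_card, Fintype.card_equiv ej, ← Nat.card_eq_fintype_card, f.2 j]
  have h3 : Nat.card (Equiv.Perm α) = Nat.card C * ∏ j, Nat.factorial (k j) := by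
    rw [h1, Finset.sum_congr rfl fun f _ => h2 f, Finset.sum_const, Finset.card_univ,
      smul_eq_mul, Nat.card_eq_fintype_card]
  have h4 : Nat.card (Equiv.Perm α) = Nat.multinomial Finset.univ k * ∏ j, Nat.factorial (k j) := by
    rw [Nat.card_eq_fintype_card, Fintype.card_perm, ← hk, ← Nat.multinomial_spec, mul_comm]
  have hpos : 0 < ∏ j, Nat.factorial (k j) := Finset.prod_pos fun j _ => Nat.factorial_pos _
  exact Nat.eq_of_mul_eq_mul_right hpos (h3.symm.trans h4)


private def compFiberSigma {A B : Type*} {m : ℕ} (π : A → B) (f₀ : B → Fin m) (j : Fin m) :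
    {x : A // f₀ (π x) = j} ≃ Σ b : {b : B // f₀ b = j}, {x : A // π x = b.1} where
  toFun x := ⟨⟨π x.1, x.2⟩, ⟨x.1, rfl⟩⟩
  invFun p := ⟨p.2.1, by rw [p.2.2]; exact p.1.2⟩
  left_inv x := rfl
  right_inv := by
    rintro ⟨⟨b, hb⟩, x, hx⟩
    obtain rfl : b = π x := hx.symm
    rfl

private lemma card_comp_fiber {A B : Type*} [Finite A] [Finite B] {m : ℕ}
    (π : A → B) (f₀ : B → Fin m) (d : ℕ)
    (hfib : ∀ b, Nat.card {x : A // π x = b} = d) (j : Fin m) :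
    Nat.card {x : A // f₀ (π x) = j} = d * Nat.card {b : B // f₀ b = j} := by
  classical
  letI : Fintype B := Fintype.ofFinite B
  letI : ∀ b : {b : B // f₀ b = j}, Fintype {x : A // π x = b.1} := fun b => Fintype.ofFinite _
  letI : Fintype {b : B // f₀ b = j} := Fintype.ofFinite _
  rw [Nat.card_congr (compFiberSigma π f₀ j), Nat.card_eq_fintype_card, Fintype.card_sigma]
  have : ∀ b : {b : B // f₀ b = j}, Fintype.card {x : A // π x = b.1} = d := fun b => by
    rw [← Nat.card_eq_fintype_card]; exact hfib b.1
  rw [Finset.sum_congr rfl fun b _ => this b, Finset.sum_const, Finset.card_univ, smul_eq_mul,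
    mul_comm, Nat.card_eq_fintype_card]

private lemma card_fixed (N m : ℕ) [NeZero N] (n : Fin m → ℕ) (hsum : ∑ j, n j = N)
    (c : ZMod N) :
    Nat.card {f : {f : ZMod N → Fin m // IsColoring N m n f} // ∀ x, f.1 (x + c) = f.1 x} =
      if addOrderOf c ∣ Finset.univ.gcd n then
        Nat.multinomial Finset.univ (fun j => n j / addOrderOf c)
      else 0 := by
  classical
  set d := addOrderOf c with hd
  set H := AddSubgroup.zmultiples c with hHdef
  have hdpos : 0 < d := addOrderOf_pos c
  have hcardH : Nat.card H = d := Nat.card_zmultiples c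
  have hNQ : N = Nat.card (ZMod N ⧸ H) * d := by
    rw [← hcardH, ← AddSubgroup.card_eq_card_quotient_mul_card_addSubgroup, Nat.card_zmod]
  have hmkfib : ∀ q : ZMod N ⧸ H, Nat.card {x : ZMod N // (x : ZMod N ⧸ H) = q} = d := by
    intro q
    have e1 : {x : ZMod N // (x : ZMod N ⧸ H) = q} ≃
        (QuotientAddGroup.mk ⁻¹' ({q} : Set (ZMod N ⧸ H))) :=
      Equiv.subtypeEquivRight fun x => by simp
    rw [Nat.card_congr (e1.trans (QuotientAddGroup.preimageMkEquivAddSubgroupProdSet H {q}))]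
    simp [← Nat.card_eq_fintype_card, hcardH]
  have key : ∀ (f : ZMod N → Fin m), (∀ x, f (x + c) = f x) →
      ∀ (t : ℤ) (x : ZMod N), f (x + t • c) = f x := by
    intro f hf t
    induction t using Int.induction_on with
    | zero => simp
    | succ t ih =>
        intro x
        have h : x + ((t : ℤ) + 1) • c = (x + c) + (t : ℤ) • c := by
          rw [add_zsmul, one_zsmul]; ring
        rw [h, ih, hf]
    | pred t ih =>
        intro x
        have h : x + (-(t : ℤ) - 1) • c = (x - c) + (-(t : ℤ)) • c := by
          rw [sub_zsmul, one_zsmul]; ring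
        rw [h, ih]
        have h2 := hf (x - c); rw [sub_add_cancel] at h2; exact h2.symm
  have key' : ∀ (f : ZMod N → Fin m), (∀ x, f (x + c) = f x) →
      ∀ a b : ZMod N, -a + b ∈ H → f a = f b := by
    intro f hf a b hab
    obtain ⟨t, ht⟩ := AddSubgroup.mem_zmultiples_iff.mp hab
    have : b = a + t • c := by rw [ht]; ring
    rw [this, key f hf]
  -- the equivalence with colorings of the quotient
  let E : {f : {f : ZMod N → Fin m // IsColoring N m n f} // ∀ x, f.1 (x + c) = f.1 x} ≃
      {f₀ : ZMod N ⧸ H → Fin m // ∀ j, d * Nat.card {q // f₀ q = j} = n j} :=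
    { toFun := fun f => ⟨fun q => Quotient.liftOn' q f.1.1
        (fun a b hab => key' f.1.1 f.2 a b (QuotientAddGroup.leftRel_apply.mp hab)), by
          intro j
          have := card_comp_fiber (QuotientAddGroup.mk : ZMod N → ZMod N ⧸ H)
            (fun q => Quotient.liftOn' q f.1.1
              (fun a b hab => key' f.1.1 f.2 a b (QuotientAddGroup.leftRel_apply.mp hab))) d
            hmkfib j
          rw [← this]
          exact f.1.2 j⟩
      invFun := fun f₀ => ⟨⟨fun x => f₀.1 x, fun j => by
          rw [card_comp_fiber (QuotientAddGroup.mk : ZMod N → ZMod N ⧸ H) f₀.1 d hmkfib j]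
          exact f₀.2 j⟩, by
          intro x
          have : ((x + c : ZMod N) : ZMod N ⧸ H) = (x : ZMod N ⧸ H) := by
            rw [QuotientAddGroup.eq]
            have h2 : -(x + c) + x = -c := by ring
            rw [h2]
            exact neg_mem (AddSubgroup.mem_zmultiples c)
          simp only [this]⟩
      left_inv := fun f => by
        apply Subtype.ext; apply Subtype.ext; funext x; rfl
      right_inv := fun f₀ => by
        apply Subtype.ext; funext q
        induction q using QuotientAddGroup.induction_on with
        | H x => rfl }
  rw [Nat.card_congr E]
  by_cases hdvd : d ∣ Finset.univ.gcd n
  · rw [if_pos hdvd]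
    have hdvd' : ∀ j, d ∣ n j := fun j =>
      hdvd.trans (Finset.gcd_dvd (Finset.mem_univ j))
    have e2 : {f₀ : ZMod N ⧸ H → Fin m // ∀ j, d * Nat.card {q // f₀ q = j} = n j} ≃
        {f₀ : ZMod N ⧸ H → Fin m // ∀ j, Nat.card {q // f₀ q = j} = n j / d} :=
      Equiv.subtypeEquivRight fun f₀ => by
        constructor
        · intro h j; rw [← h j, Nat.mul_div_cancel_left _ hdpos]
        · intro h j; rw [h j, Nat.mul_div_cancel' (hdvd' j)]
    rw [Nat.card_congr e2]
    letI : Fintype (ZMod N ⧸ H) := Fintype.ofFinite _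
    letI : DecidableEq (ZMod N ⧸ H) := Classical.decEq _
    refine card_colorings _ ?_
    have hs : d * ∑ j, n j / d = d * Fintype.card (ZMod N ⧸ H) := by
      rw [Finset.mul_sum]
      have : ∀ j ∈ Finset.univ, d * (n j / d) = n j := fun j _ =>
        Nat.mul_div_cancel' (hdvd' j)
      rw [Finset.sum_congr rfl this, hsum, ← Nat.card_eq_fintype_card]
      exact hNQ.trans (mul_comm _ _)
    exact Nat.eq_of_mul_eq_mul_left hdpos hs
  · rw [if_neg hdvd]
    have : IsEmpty {f₀ : ZMod N ⧸ H → Fin m // ∀ j, d * Nat.card {q // f₀ q = j} = n j} := by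
      constructor
      rintro ⟨f₀, hf₀⟩
      exact hdvd (Finset.dvd_gcd fun j _ => ⟨_, (hf₀ j).symm⟩)
    exact Nat.card_of_isEmpty

instance coloringAddAction (N m : ℕ) (n : Fin m → ℕ) :
    AddAction (ZMod N) {f : ZMod N → Fin m // IsColoring N m n f} where
  vadd c f := ⟨fun x => f.1 (x + c), fun j => by
    rw [Nat.card_congr ((Equiv.addRight c).subtypeEquiv (fun x => Iff.rfl) :
      {x : ZMod N // f.1 (x + c) = j} ≃ {y : ZMod N // f.1 y = j})]
    exact f.2 j⟩
  zero_vadd f := Subtype.ext (funext fun x => by show f.1 (x + 0) = f.1 x; rw [add_zero])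
  add_vadd a b f := Subtype.ext (funext fun x => by
    show f.1 (x + (a + b)) = f.1 (x + a + b)
    rw [add_assoc])

/-- Pólya enumeration for cyclic necklaces:
`N * γ(C_N, n) = ∑_{d ∣ Δ} φ(d) * P(n/d)` where `Δ = gcd_j (n j)`. -/
theorem cyclic_necklace_count (m N : ℕ) (hm : 1 ≤ m) (hN : 1 ≤ N)
    (n : Fin m → ℕ) (hsum : ∑ j, n j = N) :
    N * gammaC N m n =
      ∑ d ∈ (Finset.univ.gcd n).divisors,
        Nat.totient d * Nat.multinomial Finset.univ (fun j => n j / d) := by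
  classical
  haveI : NeZero N := ⟨by omega⟩
  set X := {f : ZMod N → Fin m // IsColoring N m n f} with hX
  set Δ := Finset.univ.gcd n with hΔ
  have hΔN : Δ ∣ N := by
    rw [← hsum]; exact Finset.dvd_sum fun j _ => Finset.gcd_dvd (Finset.mem_univ j)
  have hsetoid : cyclicSetoid N m n = AddAction.orbitRel (ZMod N) X := by
    apply Setoid.ext
    intro f g
    show (∃ c : ZMod N, ∀ x, g.1 x = f.1 (x + c)) ↔ f ∈ AddAction.orbit (ZMod N) g
    rw [AddAction.mem_orbit_iff]
    constructor
    · rintro ⟨c, h⟩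
      refine ⟨-c, Subtype.ext (funext fun x => ?_)⟩
      show g.1 (x + -c) = f.1 x
      rw [h (x + -c), neg_add_cancel_right]
    · rintro ⟨c, rfl⟩
      refine ⟨-c, fun x => ?_⟩
      show g.1 x = g.1 (x + -c + c)
      rw [neg_add_cancel_right]
  letI : Fintype X := Fintype.ofFinite X
  letI : ∀ c : ZMod N, Fintype (AddAction.fixedBy X c) := fun c => Fintype.ofFinite _
  letI : Fintype (Quotient (AddAction.orbitRel (ZMod N) X)) := Fintype.ofFinite _
  have hBurn := AddAction.sum_card_fixedBy_eq_card_orbits_mul_card_addGroup (ZMod N) X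
  have hγ : gammaC N m n = Fintype.card (Quotient (AddAction.orbitRel (ZMod N) X)) := by
    rw [gammaC, hsetoid, Nat.card_eq_fintype_card]
  have hfix : ∀ c : ZMod N, Fintype.card (AddAction.fixedBy X c) =
      (if addOrderOf c ∣ Δ then
        Nat.multinomial Finset.univ (fun j => n j / addOrderOf c) else 0) := by
    intro c
    rw [← Nat.card_eq_fintype_card, ← card_fixed N m n hsum c]
    apply Nat.card_congr
    apply Equiv.subtypeEquivRight
    intro f
    rw [AddAction.mem_fixedBy, Subtype.ext_iff, funext_iff]
    exact Iff.rfl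
  have hN0 : N ≠ 0 := by omega
  have hmaps : ∀ c : ZMod N, c ∈ Finset.univ → addOrderOf c ∈ N.divisors := by
    intro c _
    rw [Nat.mem_divisors]
    refine ⟨?_, hN0⟩
    have h := addOrderOf_dvd_card (x := c)
    rwa [ZMod.card] at h
  have hstep : ∑ c : ZMod N, Fintype.card (AddAction.fixedBy X c) =
      ∑ e ∈ N.divisors, Nat.totient e *
        (if e ∣ Δ then Nat.multinomial Finset.univ (fun j => n j / e) else 0) := by
    rw [Finset.sum_congr rfl fun c _ => hfix c,
      ← Finset.sum_fiberwise_of_maps_to hmaps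
        (fun c => if addOrderOf c ∣ Δ then
          Nat.multinomial Finset.univ (fun j => n j / addOrderOf c) else 0)]
    refine Finset.sum_congr rfl fun e he => ?_
    have hinner : ∀ c ∈ Finset.univ.filter (fun c : ZMod N => addOrderOf c = e),
        (if addOrderOf c ∣ Δ then
          Nat.multinomial Finset.univ (fun j => n j / addOrderOf c) else 0) =
        (if e ∣ Δ then Nat.multinomial Finset.univ (fun j => n j / e) else 0) := by
      intro c hc
      rw [Finset.mem_filter] at hc
      rw [hc.2]
    rw [Finset.sum_congr rfl hinner, Finset.sum_const, smul_eq_mul]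
    congr 1
    have := IsAddCyclic.card_addOrderOf_eq_totient (α := ZMod N)
      (d := e) (by rw [ZMod.card]; exact (Nat.mem_divisors.mp he).1)
    exact this
  have hfinal : ∑ e ∈ N.divisors, Nat.totient e *
      (if e ∣ Δ then Nat.multinomial Finset.univ (fun j => n j / e) else 0) =
      ∑ e ∈ Δ.divisors, Nat.totient e * Nat.multinomial Finset.univ (fun j => n j / e) := by
    rw [← Nat.divisors_filter_dvd_of_dvd hN0 hΔN, Finset.sum_filter]
    refine Finset.sum_congr rfl fun e _ => ?_
    by_cases h : e ∣ Δ <;> simp [h]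
  rw [mul_comm, ← hγ, ZMod.card] at hBurn
  rw [← hBurn, hstep, hfinal]
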